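/- Let ν₁, ν₂ > 0 with ν₂ < ν₁, ν₁ + ν₂ ≤ 1, ν₁ − ν₂ ≤ 1, A > 0, and β_0 γ_0 ≥ (ν₁ − ν₂)/A. With β_k = β_0 (k+1)^(-ν₁), γ_k = γ_0 (k+1)^(-ν₂), the quantity ϖ_k := (1 − (β_{k+1}/γ_{k+1})·(γ_k/β_k)) / (β_k γ_k) satisfies ϖ_k < A for all k ≥ 0. -/

import Mathlib

theorem stmt16 (ν1 ν2 β0 γ0 A : ℝ) (hν1 : 0 < ν1) (hν2 : 0 < ν2)
    (hlt : ν2 < ν1) (hsum : ν1 + ν2 ≤ 1) (hdiff : ν1 - ν2 ≤ 1)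
    (hβ0 : 0 < β0) (hγ0 : 0 < γ0) (hA : 0 < A)
    (hcond : (ν1 - ν2) / A ≤ β0 * γ0) :
    ∀ k : ℕ,
      (1 - ((β0 * ((k : ℝ) + 2) ^ (-ν1)) / (γ0 * ((k : ℝ) + 2) ^ (-ν2)))
            * ((γ0 * ((k : ℝ) + 1) ^ (-ν2)) / (β0 * ((k : ℝ) + 1) ^ (-ν1)))) /
          ((β0 * ((k : ℝ) + 1) ^ (-ν1)) * (γ0 * ((k : ℝ) + 1) ^ (-ν2))) < A := by
  intro k
  set n : ℝ := (k : ℝ) + 1 with hn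
  have hn1 : (1:ℝ) ≤ n := by
    have : (0:ℝ) ≤ (k:ℝ) := Nat.cast_nonneg k
    simp only [hn]; linarith
  have hn0 : (0:ℝ) < n := by positivity
  have hm0 : (0:ℝ) < n + 1 := by positivity
  have hk2 : (k : ℝ) + 2 = n + 1 := by ring
  set b : ℝ := ν1 - ν2 with hb
  set a : ℝ := ν1 + ν2 with ha
  have hbpos : 0 < b := by simp [hb]; linarith
  -- Bernoulli: (1 + 1/n)^b ≤ 1 + b/n
  have hbern : (1 + 1/n) ^ b ≤ 1 + b * (1/n) :=
    rpow_one_add_le_one_add_mul_self (by have := one_div_pos.mpr hn0; linarith) hbpos.le hdiff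
  have hbn : 0 < b * (1/n) := mul_pos hbpos (by positivity)
  -- r := (n/(n+1))^b > 1 - b/n
  have hr : (1:ℝ) - b * (1/n) < (n / (n+1)) ^ b := by
    have h1 : ((n+1)/n) ^ b ≤ 1 + b * (1/n) := by
      have : (n+1)/n = 1 + 1/n := by field_simp
      rw [this]; exact hbern
    have h2 : (n/(n+1)) ^ b = (((n+1)/n) ^ b)⁻¹ := by
      rw [show n/(n+1) = ((n+1)/n)⁻¹ from (inv_div _ _).symm,
        ← Real.inv_rpow (by positivity)]
    rw [h2]
    have hpow0 : (0:ℝ) < ((n+1)/n) ^ b := Real.rpow_pos_of_pos (by positivity) b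
    have h3 : (1 + b * (1/n))⁻¹ ≤ (((n+1)/n) ^ b)⁻¹ := by
      apply inv_anti₀ hpow0 h1
    have h4 : (1:ℝ) - b * (1/n) < (1 + b * (1/n))⁻¹ := by
      have hmul : (1 - b * (1/n)) * (1 + b * (1/n)) < 1 := by nlinarith
      rw [← one_div, lt_div_iff₀ (by positivity)]
      exact hmul
    linarith
  -- rewrite the ratio as (n/(n+1))^b
  have hne1 : ((n+1):ℝ) ^ (-ν1) ≠ 0 := (Real.rpow_pos_of_pos hm0 _).ne'
  have hne2 : ((n+1):ℝ) ^ (-ν2) ≠ 0 := (Real.rpow_pos_of_pos hm0 _).ne'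
  have hne3 : (n:ℝ) ^ (-ν1) ≠ 0 := (Real.rpow_pos_of_pos hn0 _).ne'
  have hne4 : (n:ℝ) ^ (-ν2) ≠ 0 := (Real.rpow_pos_of_pos hn0 _).ne'
  have hratio : ((β0 * (n+1) ^ (-ν1)) / (γ0 * (n+1) ^ (-ν2)))
      * ((γ0 * n ^ (-ν2)) / (β0 * n ^ (-ν1))) = (n / (n+1)) ^ b := by
    rw [Real.div_rpow hn0.le hm0.le, hb,
      Real.rpow_sub hn0, Real.rpow_sub hm0]
    rw [show (-ν1) = -ν1 from rfl]
    field_simp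
    rw [Real.rpow_neg hn0.le, Real.rpow_neg hn0.le,
        Real.rpow_neg hm0.le, Real.rpow_neg hm0.le] at *
    field_simp
  -- denominator
  have hden : (β0 * n ^ (-ν1)) * (γ0 * n ^ (-ν2)) = β0 * γ0 * n ^ (-a) := by
    rw [ha, neg_add, Real.rpow_add hn0]
    ring
  have hdenpos : 0 < β0 * γ0 * n ^ (-a) := by
    have := Real.rpow_pos_of_pos hn0 (-a); positivity
  -- n^(-a) ≥ 1/n
  have hna : 1/n ≤ n ^ (-a) := by
    have h := Real.rpow_le_rpow_of_exponent_le hn1 (show -(1:ℝ) ≤ -a by linarith)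
    have e : n ^ (-(1:ℝ)) = 1/n := by
      rw [Real.rpow_neg hn0.le, Real.rpow_one, one_div]
    linarith [e ▸ h]
  -- b ≤ A * (β0*γ0)
  have hbA : b ≤ A * (β0 * γ0) := by
    rw [div_le_iff₀ hA] at hcond; linarith [hcond]
  rw [hk2, hratio, hden, div_lt_iff₀ hdenpos]
  have key : 1 - (n/(n+1)) ^ b < b * n ^ (-a) := by
    have : b * (1/n) ≤ b * n ^ (-a) := by
      apply mul_le_mul_of_nonneg_left hna hbpos.le
    linarith
  have hnapos : 0 < n ^ (-a) := Real.rpow_pos_of_pos hn0 _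
  calc 1 - (n/(n+1)) ^ b < b * n ^ (-a) := key
    _ ≤ A * (β0 * γ0) * n ^ (-a) := by nlinarith
    _ = A * (β0 * γ0 * n ^ (-a)) := by ring
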